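/- The set of integer points (k_1, k_2, k_3, r_2, r_3) in Z^5 satisfying k_1, k_2, k_3 >= 0, k_1 >= r_2 >= 0, r_2 + k_2 >= r_3 >= 0, r_2 + k_2 - r_3 >= 2*k_2, and r_2 >= k_2 is exactly the set of nonnegative integer combinations of the vectors (1,0,0,0,0), (0,0,1,0,0), (1,0,0,1,0), (1,0,0,1,1), (1,1,0,1,0); moreover these five vectors form a Z-basis of Z^5 (the cone is unimodular). -/

import Mathlib

/-- The five generators of the cone `C₁`, in coordinates `(k₁,k₂,k₃,r₂,r₃)`. -/
def coneOneGen : Fin 5 → Fin 5 → ℤ :=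
  ![![1,0,0,0,0], ![0,0,1,0,0], ![1,0,0,1,0], ![1,0,0,1,1], ![1,1,0,1,0]]

/-- The matrix whose columns are the generators. -/
def coneOneMat : Matrix (Fin 5) (Fin 5) ℤ := Matrix.transpose (Matrix.of coneOneGen)

def coneOneInv : Matrix (Fin 5) (Fin 5) ℤ :=
  Matrix.of ![![1,0,0,-1,0], ![0,0,1,0,0], ![0,-1,0,1,-1], ![0,0,0,0,1], ![0,1,0,0,0]]

lemma coneOne_mul_inv : coneOneMat * coneOneInv = 1 := by
  decide

lemma coneOne_inv_mul : coneOneInv * coneOneMat = 1 := by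
  decide

/-- The integer points `(k₁,k₂,k₃,r₂,r₃) ∈ ℤ⁵` satisfying `k₁,k₂,k₃ ≥ 0`,
`k₁ ≥ r₂ ≥ 0`, `r₂ + k₂ ≥ r₃ ≥ 0`, `r₂ + k₂ - r₃ ≥ 2k₂` and `r₂ ≥ k₂` are exactly
the nonnegative integer combinations of the five listed vectors; moreover these
five vectors form a `ℤ`-basis of `ℤ⁵` (the cone is unimodular). -/
theorem coneOne_points_and_unimodular :
    (∀ x : Fin 5 → ℤ,
        (0 ≤ x 0 ∧ 0 ≤ x 1 ∧ 0 ≤ x 2 ∧ 0 ≤ x 3 ∧ x 3 ≤ x 0 ∧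
          0 ≤ x 4 ∧ x 4 ≤ x 3 + x 1 ∧ 2 * x 1 ≤ x 3 + x 1 - x 4 ∧ x 1 ≤ x 3) ↔
        ∃ c : Fin 5 → ℕ, x = ∑ i, (c i : ℤ) • coneOneGen i) ∧
    ∃ b : Module.Basis (Fin 5) ℤ (Fin 5 → ℤ), ∀ i, b i = coneOneGen i := by
  constructor
  · intro x
    constructor
    · rintro ⟨h0, h1, h2, h3, h30, h4, h43, h2x, h13⟩
      refine ⟨![(x 0 - x 3).toNat, (x 2).toNat, (x 3 - x 1 - x 4).toNat,
        (x 4).toNat, (x 1).toNat], ?_⟩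
      have e0 : ((x 0 - x 3).toNat : ℤ) = x 0 - x 3 := Int.toNat_of_nonneg (by omega)
      have e1 : ((x 2).toNat : ℤ) = x 2 := Int.toNat_of_nonneg h2
      have e2 : ((x 3 - x 1 - x 4).toNat : ℤ) = x 3 - x 1 - x 4 :=
        Int.toNat_of_nonneg (by omega)
      have e3 : ((x 4).toNat : ℤ) = x 4 := Int.toNat_of_nonneg h4
      have e4 : ((x 1).toNat : ℤ) = x 1 := Int.toNat_of_nonneg h1
      funext j
      fin_cases j <;>
        simp [coneOneGen, Fin.sum_univ_five, e0, e1, e2, e3, e4, Matrix.vecHead, Matrix.vecTail] <;> ring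
    · rintro ⟨c, rfl⟩
      simp only [Fin.sum_univ_five, coneOneGen, Pi.add_apply, Pi.smul_apply,
        smul_eq_mul, Matrix.cons_val_zero, Matrix.cons_val_one, Matrix.head_cons,
        Matrix.cons_val_two, Matrix.tail_cons, Matrix.cons_val_three,
        Matrix.cons_val_four, Matrix.cons_val_fin_one]
      refine ⟨?_, ?_, ?_, ?_, ?_, ?_, ?_, ?_, ?_⟩ <;> push_cast <;> omega
  · have hinv : Invertible coneOneMat :=
      invertibleOfRightInverse _ _ coneOne_mul_inv
    refine ⟨(Pi.basisFun ℤ (Fin 5)).map (Matrix.toLinearEquiv' coneOneMat hinv), ?_⟩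
    intro i
    funext j
    simp [Matrix.toLinearEquiv', coneOneMat, Matrix.mulVec_single, unitOfInvertible]
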